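/- arXiv:2409.14252 — 4 statements merged into one kernel-verified Lean document; each statement's English description precedes it below -/
import Mathlib

section
/- Let G be a finite set equipped with a strict partial order < (the happened-before relation), let V ⊆ G, and define Events(V) = V ∪ {e ∈ G | ∃ v ∈ V, e < v}. Then the following two conditions are equivalent: (1) every event in Events(V) happened before every event in G \ Events(V), i.e., ∀ e₁ ∈ Events(V), ∀ e₂ ∈ G \ Events(V), e₁ < e₂; and (2) every event of G is either in Events(V) or happened after all elements of V, i.e., ∀ e₁ ∈ G, e₁ ∈ Events(V) ∨ (∀ e₂ ∈ V, e₂ < e₁). -/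
/-- The set of events of a version `V`: the elements of `V` together with all
their ancestors (lower closure of `V`). -/
def Events {G : Type*} (lt : G → G → Prop) (V : Set G) : Set G :=
  V ∪ {e | ∃ v ∈ V, lt e v}

/-- For a finite event graph `G` (modeled as a finite type) with
strict partial order `lt` and a version `V ⊆ G`, the following are equivalent:
(1) every event in `Events V` happened before every event not in `Events V`;
(2) every event is either in `Events V` or happened after all elements of `V`. -/
theorem critical_version_iff {G : Type*} [Fintype G]
    (lt : G → G → Prop)
    (hirr : ∀ e : G, ¬ lt e e)
    (htrans : ∀ a b c : G, lt a b → lt b c → lt a c)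
    (V : Set G) :
    (∀ e₁ ∈ Events lt V, ∀ e₂ : G, e₂ ∉ Events lt V → lt e₁ e₂) ↔
    (∀ e₁ : G, e₁ ∈ Events lt V ∨ ∀ e₂ ∈ V, lt e₂ e₁) := by
  constructor
  · intro h e₁
    by_cases he : e₁ ∈ Events lt V
    · exact Or.inl he
    · exact Or.inr fun e₂ hv => h e₂ (Or.inl hv) e₁ he
  · intro h e₁ h₁ e₂ h₂
    rcases h e₂ with he | he
    · exact absurd he h₂
    · rcases h₁ with hv | ⟨v, hv, hlt⟩
      · exact he e₁ hv
      · exact htrans _ _ _ hlt (he v hv)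
end

section
/- Let G be a finite set equipped with a strict partial order < (the happened-before relation), and for V ⊆ G define Events(V) = V ∪ {e ∈ G | ∃ v ∈ V, e < v}. If V₁ and V₂ are both critical versions of G (i.e., for each Vᵢ, every event in Events(Vᵢ) happened before every event in G \ Events(Vᵢ)), then Events(V₁) ⊆ Events(V₂) or Events(V₂) ⊆ Events(V₁). Consequently, the event sets of the critical versions of a finite event graph form a chain under inclusion, so among finitely many critical versions there is a latest one. -/
/-- A version `V` is critical if every event in `Events V` happened before
every event not in `Events V`. -/
def IsCriticalVersion {G : Type*} (lt : G → G → Prop) (V : Set G) : Prop :=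
  ∀ e₁ ∈ Events lt V, ∀ e₂ : G, e₂ ∉ Events lt V → lt e₁ e₂

/-- The event sets of any two critical versions of a finite event
graph are comparable under inclusion; hence critical versions form a chain. -/
theorem critical_versions_chain {G : Type*} [Fintype G]
    (lt : G → G → Prop)
    (hirr : ∀ e : G, ¬ lt e e)
    (htrans : ∀ a b c : G, lt a b → lt b c → lt a c)
    (V₁ V₂ : Set G)
    (h₁ : IsCriticalVersion lt V₁)
    (h₂ : IsCriticalVersion lt V₂) :
    Events lt V₁ ⊆ Events lt V₂ ∨ Events lt V₂ ⊆ Events lt V₁ := by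
  by_contra h
  push_neg at h
  obtain ⟨hn1, hn2⟩ := h
  rw [Set.not_subset] at hn1 hn2
  obtain ⟨a, ha1, ha2⟩ := hn1
  obtain ⟨b, hb2, hb1⟩ := hn2
  have hab := h₁ a ha1 b hb1
  have hba := h₂ b hb2 a ha2
  exact hirr a (htrans a b a hab hba)
end

section
/- Let G be a finite set equipped with a strict partial order < (the happened-before relation), and let E and E' be two topological sorts of G (lists containing each element of G exactly once, in which x appears before y whenever x < y). Then E can be transformed into E' by a finite sequence of steps, where each step swaps two adjacent entries a, b of the current list that are concurrent (a ≠ b, ¬(a < b), ¬(b < a)), and every intermediate list in this sequence is itself a topological sort of G. -/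
/-- A topological sort of the finite event graph `G` (modeled as a finite type):
a list containing each element exactly once, in which `x` appears before `y`
whenever `lt x y`. -/
def IsTopSort {G : Type*} [DecidableEq G] (lt : G → G → Prop) (l : List G) : Prop :=
  l.Nodup ∧ (∀ x : G, x ∈ l) ∧ ∀ x y : G, lt x y → l.idxOf x < l.idxOf y


lemma isTopSort_iff {G : Type*} [DecidableEq G] (lt : G → G → Prop)
    (hirr : ∀ e : G, ¬ lt e e) (l : List G) :
    IsTopSort lt l ↔ l.Nodup ∧ (∀ x : G, x ∈ l) ∧ l.Pairwise (fun x y => ¬ lt y x) := by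
  constructor
  · rintro ⟨hnd, hmem, hlt⟩
    refine ⟨hnd, hmem, List.pairwise_iff_getElem.mpr ?_⟩
    intro i j hi hj hij hcon
    have := hlt _ _ hcon
    rw [List.Nodup.idxOf_getElem hnd, List.Nodup.idxOf_getElem hnd] at this
    omega
  · rintro ⟨hnd, hmem, hpw⟩
    refine ⟨hnd, hmem, ?_⟩
    intro x y hxy
    have hx := List.idxOf_lt_length_iff.mpr (hmem x)
    have hy := List.idxOf_lt_length_iff.mpr (hmem y)
    have hne : x ≠ y := fun h => hirr x (h ▸ hxy)
    have hidx : l.idxOf x ≠ l.idxOf y := by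
      intro h
      apply hne
      have h1 := List.getElem_idxOf hx
      have h2 := List.getElem_idxOf hy
      rw [← h1, ← h2]
      congr 1
    rcases lt_or_gt_of_ne hidx with h | h
    · exact h
    · exfalso
      have := List.pairwise_iff_getElem.mp hpw _ _ hy hx h
      rw [List.getElem_idxOf hx, List.getElem_idxOf hy] at this
      exact this hxy

lemma swap_topSort {G : Type*} [DecidableEq G] (lt : G → G → Prop)
    (hirr : ∀ e : G, ¬ lt e e) (l₁ l₂ : List G) (a b : G)
    (hab : ¬ lt a b) (hba : ¬ lt b a)
    (h : IsTopSort lt (l₁ ++ a :: b :: l₂)) :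
    IsTopSort lt (l₁ ++ b :: a :: l₂) := by
  rw [isTopSort_iff lt hirr] at h ⊢
  obtain ⟨hnd, hmem, hpw⟩ := h
  have hperm : (l₁ ++ a :: b :: l₂).Perm (l₁ ++ b :: a :: l₂) :=
    List.Perm.append_left l₁ (List.Perm.swap b a l₂)
  refine ⟨hperm.nodup_iff.mp hnd, fun x => hperm.mem_iff.mp (hmem x), ?_⟩
  simp only [List.pairwise_append, List.pairwise_cons, List.mem_cons] at hpw ⊢
  obtain ⟨h1, ⟨h2, h3, h4⟩, h5⟩ := hpw
  refine ⟨h1, ⟨?_, fun y hy => h2 y (Or.inr hy), h4⟩, ?_⟩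
  · rintro y (rfl | hy)
    · exact hab
    · exact h3 y hy
  · intro x hx y hy
    rcases hy with rfl | rfl | hy
    · exact h5 x hx y (Or.inr (Or.inl rfl))
    · exact h5 x hx y (Or.inl rfl)
    · exact h5 x hx y (Or.inr (Or.inr hy))

/-- One step swapping two adjacent concurrent entries `a`, `b` of a list. -/
def ConcurrentSwap {G : Type*} (lt : G → G → Prop) (l l' : List G) : Prop :=
  ∃ (l₁ l₂ : List G) (a b : G), a ≠ b ∧ ¬ lt a b ∧ ¬ lt b a ∧
    l = l₁ ++ [a, b] ++ l₂ ∧ l' = l₁ ++ [b, a] ++ l₂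

lemma bubble {G : Type*} [DecidableEq G] (lt : G → G → Prop)
    (hirr : ∀ e : G, ¬ lt e e) :
    ∀ (p l r : List G) (a : G),
      (∀ x ∈ p, ¬ lt x a ∧ ¬ lt a x) →
      IsTopSort lt (l ++ p ++ a :: r) →
      IsTopSort lt (l ++ a :: (p ++ r)) ∧
        Relation.ReflTransGen (fun u v => ConcurrentSwap lt u v ∧ IsTopSort lt v)
          (l ++ p ++ a :: r) (l ++ a :: (p ++ r)) := by
  intro p
  induction p using List.reverseRecOn with
  | nil =>
    intro l r a _ h
    simpa using ⟨by simpa using h, Relation.ReflTransGen.refl⟩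
  | append_singleton q b ih =>
    intro l r a hconc h
    have hconcq : ∀ x ∈ q, ¬ lt x a ∧ ¬ lt a x := fun x hx =>
      hconc x (by simp [hx])
    have hb := hconc b (by simp)
    have hne : b ≠ a := by
      rintro rfl
      have hnd := h.1
      have : b ∈ l ++ (q ++ [b]) ++ b :: r := by simp
      rw [show l ++ (q ++ [b]) ++ b :: r = (l ++ q) ++ b :: b :: r by simp] at hnd
      have := (List.nodup_append'.mp hnd).2.1
      simp at this
    have heq1 : l ++ (q ++ [b]) ++ a :: r = (l ++ q) ++ [b, a] ++ r := by simp
    have heq2 : (l ++ q) ++ [a, b] ++ r = l ++ q ++ a :: (b :: r) := by simp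
    have hts2 : IsTopSort lt ((l ++ q) ++ [a, b] ++ r) := by
      have := swap_topSort lt hirr (l ++ q) r b a hb.1 hb.2 (by rw [← heq1] at *; simpa using h)
      simpa using this
    have hstep : (fun u v => ConcurrentSwap lt u v ∧ IsTopSort lt v)
        (l ++ (q ++ [b]) ++ a :: r) ((l ++ q) ++ [a, b] ++ r) := by
      refine ⟨⟨l ++ q, r, b, a, hne, hb.1, hb.2, by simp, rfl⟩, hts2⟩
    have hih := ih l (b :: r) a hconcq (by rw [heq2] at hts2; simpa using hts2)
    refine ⟨by simpa using hih.1, ?_⟩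
    refine Relation.ReflTransGen.head hstep ?_
    rw [heq2]
    have := hih.2
    simpa using this

lemma connect {G : Type*} [DecidableEq G] (lt : G → G → Prop)
    (hirr : ∀ e : G, ¬ lt e e) :
    ∀ (n : ℕ) (E E' l : List G), E.length ≤ n → E.Perm E' →
      IsTopSort lt (l ++ E) → IsTopSort lt (l ++ E') →
      Relation.ReflTransGen (fun u v => ConcurrentSwap lt u v ∧ IsTopSort lt v)
        (l ++ E) (l ++ E') := by
  intro n
  induction n with
  | zero =>
    intro E E' l hlen hperm _ _
    rw [List.length_eq_zero_iff.mp (Nat.le_zero.mp hlen)] at hperm ⊢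
    rw [List.Perm.eq_nil hperm.symm]
  | succ n ih =>
    intro E E' l hlen hperm h1 h2
    cases E' with
    | nil =>
      rw [List.Perm.eq_nil hperm]
    | cons a t' =>
      have haE : a ∈ E := hperm.mem_iff.mpr (by simp)
      obtain ⟨p, r, rfl⟩ := List.append_of_mem haE
      -- concurrency of elements of p with a
      have hconc : ∀ x ∈ p, ¬ lt x a ∧ ¬ lt a x := by
        intro x hx
        constructor
        · -- from h2 : topsort of l ++ a :: t'
          have hpw2 := ((isTopSort_iff lt hirr _).mp h2).2.2
          rw [List.pairwise_append] at hpw2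
          have hxt' : x ∈ t' := by
            have hxE' : x ∈ a :: t' := hperm.mem_iff.mp (by simp [hx])
            rcases List.mem_cons.mp hxE' with rfl | hxt
            · exfalso
              have hnd := ((isTopSort_iff lt hirr _).mp h1).1
              rw [show l ++ (p ++ x :: r) = (l ++ p) ++ x :: r by simp] at hnd
              have := (List.nodup_append'.mp hnd).2.2
              exact this (show x ∈ l ++ p by simp [hx]) (show x ∈ x :: r by simp)
            · exact hxt
          exact (List.pairwise_cons.mp hpw2.2.1).1 x hxt'
        · -- from h1 : topsort of l ++ p ++ a :: r
          have hpw1 := ((isTopSort_iff lt hirr _).mp h1).2.2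
          rw [show l ++ (p ++ a :: r) = (l ++ p) ++ a :: r by simp,
            List.pairwise_append] at hpw1
          exact hpw1.2.2 x (by simp [hx]) a (by simp)
      have hbub := bubble lt hirr p l r a hconc (by simpa using h1)
      have hperm' : (p ++ r).Perm t' := by
        have : (a :: (p ++ r)).Perm (a :: t') :=
          (List.perm_middle.symm.trans hperm)
        exact (List.perm_cons a).mp this
      have hlen' : (p ++ r).length ≤ n := by
        have := hlen
        simp at this ⊢
        omega
      have hrec := ih (p ++ r) t' (l ++ [a]) hlen' hperm'
        (by simpa using hbub.1) (by simpa using h2)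
      refine Relation.ReflTransGen.trans (by simpa using hbub.2) ?_
      simpa using hrec


/-- Any topological sort `E` can be transformed into any other
topological sort `E'` by a finite sequence of swaps of adjacent concurrent
events, with every intermediate list itself a topological sort. -/
theorem topSorts_connected_by_concurrent_swaps {G : Type*} [Fintype G] [DecidableEq G]
    (lt : G → G → Prop)
    (hirr : ∀ e : G, ¬ lt e e)
    (htrans : ∀ a b c : G, lt a b → lt b c → lt a c)
    (E E' : List G) (hE : IsTopSort lt E) (hE' : IsTopSort lt E') :
    Relation.ReflTransGen (fun l l' => ConcurrentSwap lt l l' ∧ IsTopSort lt l') E E' := by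
  have hperm : E.Perm E' := by
    apply List.perm_of_nodup_nodup_toFinset_eq hE.1 hE'.1
    ext x
    simp [hE.2.1 x, hE'.2.1 x]
  have := connect lt hirr E.length E E' [] le_rfl hperm (by simpa using hE) (by simpa using hE')
  simpa using this
end

section
/- Let G be a finite set equipped with a strict partial order < (the happened-before relation), let S be any type of states, and let f : List G → S be a function satisfying the commutation property: for all lists l₁, l₂ and all concurrent a, b ∈ G (a ≠ b, ¬(a < b), ¬(b < a)), f(l₁ ++ [a, b] ++ l₂) = f(l₁ ++ [b, a] ++ l₂). Then f takes the same value on every topological sort of G: if E and E' are two lists each containing every element of G exactly once with x appearing before y whenever x < y, then f(E) = f(E'). In other words, if the replay of any two adjacent concurrent events commutes, then replaying the event graph is a deterministic function of the graph, independent of the chosen topological sort order. -/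
section
variable {G : Type*} {S : Type*}

lemma aux_swap (lt : G → G → Prop) (f : List G → S)
    (hcomm : ∀ (l₁ l₂ : List G) (a b : G), a ≠ b → ¬ lt a b → ¬ lt b a →
      f (l₁ ++ [a, b] ++ l₂) = f (l₁ ++ [b, a] ++ l₂))
    (a : G) :
    ∀ (u v : List G), (∀ y ∈ u, y ≠ a ∧ ¬ lt y a ∧ ¬ lt a y) →
      f (u ++ a :: v) = f (a :: (u ++ v)) := by
  intro u
  induction u using List.reverseRecOn with
  | nil => simp
  | append_singleton u' c ih =>
    intro v h
    obtain ⟨hne, h1, h2⟩ := h c (by simp)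
    have step : f ((u' ++ [c]) ++ a :: v) = f (u' ++ a :: c :: v) := by
      have := hcomm u' v c a hne h1 h2
      simpa using this
    rw [step, ih (c :: v) (fun y hy => h y (by simp [hy]))]
    simp

lemma main_ind (lt : G → G → Prop) :
    ∀ (n : ℕ) (f : List G → S),
      (∀ (l₁ l₂ : List G) (a b : G), a ≠ b → ¬ lt a b → ¬ lt b a →
        f (l₁ ++ [a, b] ++ l₂) = f (l₁ ++ [b, a] ++ l₂)) →
      ∀ (E E' : List G), E.length ≤ n → E.Nodup → E'.Nodup → E.Perm E' →
        E.Pairwise (fun x y => ¬ lt y x) → E'.Pairwise (fun x y => ¬ lt y x) →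
        f E = f E' := by
  intro n
  induction n with
  | zero =>
    intro f _ E E' hlen _ _ hperm _ _
    have : E = [] := List.eq_nil_of_length_eq_zero (Nat.le_zero.mp hlen)
    subst this
    rw [hperm.nil_eq]
  | succ n ih =>
    intro f hcomm E E' hlen hnE hnE' hperm hpE hpE'
    match E' with
    | [] =>
      rw [hperm.symm.nil_eq]
    | a :: t' =>
      have ha : a ∈ E := hperm.mem_iff.2 (by simp)
      obtain ⟨u, v, rfl⟩ := List.append_of_mem ha
      have hnd := List.nodup_append'.mp hnE
      have hanotu : a ∉ u := fun h => (hnd.2.2 h) (by simp)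
      have hconc : ∀ y ∈ u, y ≠ a ∧ ¬ lt y a ∧ ¬ lt a y := by
        intro y hy
        have hya : y ≠ a := fun h => hanotu (h ▸ hy)
        have h1 : ¬ lt a y := by
          have := (List.pairwise_append.mp hpE).2.2 y hy a (by simp)
          exact this
        have h2 : ¬ lt y a := by
          have hyE' : y ∈ a :: t' := hperm.mem_iff.1 (by simp [hy])
          have hyt' : y ∈ t' := by
            rcases List.mem_cons.mp hyE' with h | h
            · exact absurd h hya
            · exact h
          exact (List.pairwise_cons.mp hpE').1 y hyt'
        exact ⟨hya, h2, h1⟩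
      rw [aux_swap lt f hcomm a u v hconc]
      have hperm2 : (u ++ v).Perm t' :=
        (List.perm_middle.symm.trans hperm).cons_inv
      have hsub : (u ++ v).Sublist (u ++ a :: v) :=
        (List.sublist_cons_self a v).append_left u
      have := ih (fun l => f (a :: l))
        (by
          intro l₁ l₂ x y hxy h1 h2
          have := hcomm (a :: l₁) l₂ x y hxy h1 h2
          simpa using this)
        (u ++ v) t'
        (by
          have : (u ++ a :: v).length = (u ++ v).length + 1 := by simp; omega
          omega)
        (hnE.sublist hsub) (List.nodup_cons.mp hnE').2 hperm2
        (hpE.sublist hsub) (List.pairwise_cons.mp hpE').2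
      exact this

lemma topsort_pairwise [DecidableEq G] (lt : G → G → Prop) {E : List G}
    (hE : IsTopSort lt E) : E.Pairwise (fun x y => ¬ lt y x) := by
  obtain ⟨hnd, _, hord⟩ := hE
  rw [List.pairwise_iff_getElem]
  intro i j hi hj hij hlt
  have h := hord _ _ hlt
  rw [List.Nodup.idxOf_getElem hnd j hj, List.Nodup.idxOf_getElem hnd i hi] at h
  omega

end



/-- If a replay function `f` on lists of events commutes on
adjacent concurrent events, then it takes the same value on every topological
sort of the event graph: replay is a deterministic function of the graph. -/
theorem replay_deterministic {G : Type*} [Fintype G] [DecidableEq G] {S : Type*}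
    (lt : G → G → Prop)
    (hirr : ∀ e : G, ¬ lt e e)
    (htrans : ∀ a b c : G, lt a b → lt b c → lt a c)
    (f : List G → S)
    (hcomm : ∀ (l₁ l₂ : List G) (a b : G), a ≠ b → ¬ lt a b → ¬ lt b a →
      f (l₁ ++ [a, b] ++ l₂) = f (l₁ ++ [b, a] ++ l₂))
    (E E' : List G) (hE : IsTopSort lt E) (hE' : IsTopSort lt E') :
    f E = f E' := by
  have hperm : E.Perm E' :=
    (List.perm_ext_iff_of_nodup hE.1 hE'.1).2 (fun a => by simp [hE.2.1 a, hE'.2.1 a])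
  exact main_ind lt E.length f hcomm E E' le_rfl hE.1 hE'.1 hperm
    (topsort_pairwise lt hE) (topsort_pairwise lt hE')
end
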